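/- Let G be a finite p-group and H the full inverse image in G of Ω₁(ζ₂(G)/ζ₁(G)). Then H centralizes the Frattini subgroup: H ≤ C_G(Φ(G)). Moreover, if C_G(Φ(G)) ≤ Φ(G), then H is abelian. -/

import Mathlib

open Subgroup hiding upperCentralSeries mem_upperCentralSeries_succ_iff upperCentralSeries_one
open scoped commutatorElement

private lemma central_swap {G : Type*} [Group G] {z : G}
    (hz : ∀ y : G, z * y = y * z) (c x : G) :
    (z * c) * x * (z * c)⁻¹ = c * x * c⁻¹ := by
  have h1 : (z * c) * x * (z * c)⁻¹ = z * (c * x * c⁻¹) * z⁻¹ := by group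
  rw [h1, hz (c * x * c⁻¹)]
  group

private lemma conj_pow_aux {G : Type*} [Group G] {h g z : G}
    (hz : ∀ a : G, z * a = a * z) (he : h * g * h⁻¹ = z * g) :
    ∀ n : ℕ, h ^ n * g * (h ^ n)⁻¹ = z ^ n * g := by
  intro n
  induction n with
  | zero => simp
  | succ n ih =>
    have hc : Commute z (h ^ n) := hz (h ^ n)
    calc h ^ (n + 1) * g * (h ^ (n + 1))⁻¹
        = h ^ n * (h * g * h⁻¹) * (h ^ n)⁻¹ := by rw [pow_succ]; group
      _ = h ^ n * (z * g) * (h ^ n)⁻¹ := by rw [he]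
      _ = z * (h ^ n * g * (h ^ n)⁻¹) := by
          rw [← mul_assoc, ← hc.eq]; group
      _ = z * (z ^ n * g) := by rw [ih]
      _ = z ^ (n + 1) * g := by rw [pow_succ', mul_assoc]

private lemma conj_commutator_aux {G : Type*} [Group G] {h a b za zb : G}
    (ha : ∀ x : G, za * x = x * za) (hb : ∀ x : G, zb * x = x * zb)
    (ea : h * a * h⁻¹ = za * a) (eb : h * b * h⁻¹ = zb * b) :
    h * (a * b * a⁻¹ * b⁻¹) * h⁻¹ = a * b * a⁻¹ * b⁻¹ := by
  have ea' : h * a⁻¹ * h⁻¹ = (za * a)⁻¹ := by rw [← ea]; group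
  have eb' : h * b⁻¹ * h⁻¹ = (zb * b)⁻¹ := by rw [← eb]; group
  calc h * (a * b * a⁻¹ * b⁻¹) * h⁻¹
      = (h * a * h⁻¹) * (h * b * h⁻¹) * (h * a⁻¹ * h⁻¹) * (h * b⁻¹ * h⁻¹) := by group
    _ = (za * a) * (zb * b) * (za * a)⁻¹ * (zb * b)⁻¹ := by rw [ea, eb, ea', eb']
    _ = a * (zb * b) * a⁻¹ * (zb * b)⁻¹ := by rw [central_swap ha a (zb * b)]
    _ = zb * (a * b * a⁻¹ * b⁻¹) * zb⁻¹ := by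
        rw [show a * (zb * b) = zb * (a * b) by rw [← mul_assoc, ← hb a, mul_assoc]]
        group
    _ = a * b * a⁻¹ * b⁻¹ := by rw [hb (a * b * a⁻¹ * b⁻¹)]; group

/-- If `K` is a normal subgroup containing the commutator subgroup and all `p`-th
powers, then it contains the Frattini subgroup. -/
private def zmodModuleAux {A : Type*} [AddCommGroup A] {p : ℕ} (h : ∀ x : A, p • x = 0) :
    Module (ZMod p) A := AddCommGroup.zmodModule h

private lemma frattini_le_aux {G : Type*} [Group G] (p : ℕ) (hp : p.Prime)
    (K : Subgroup G) (hK : K.Normal) (hcomm : commutator G ≤ K)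
    (hpow : ∀ g : G, g ^ p ∈ K) : frattini G ≤ K := by
  haveI := hK
  haveI : Fact p.Prime := ⟨hp⟩
  intro x hx
  by_contra hxK
  rw [_root_.commutator_def] at hcomm
  letI iC : CommGroup (G ⧸ K) :=
    { (inferInstance : Group (G ⧸ K)) with
      mul_comm := by
        intro a b
        induction a using QuotientGroup.induction_on with | _ a =>
        induction b using QuotientGroup.induction_on with | _ b =>
        rw [← QuotientGroup.mk_mul, ← QuotientGroup.mk_mul, QuotientGroup.eq]
        have : (a * b)⁻¹ * (b * a) = ⁅b⁻¹, a⁻¹⁆ := by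
          rw [commutatorElement_def]; group
        rw [this]
        exact hcomm (commutator_mem_commutator (mem_top _) (mem_top _)) }
  have hppow : ∀ y : G ⧸ K, y ^ p = 1 := by
    intro y
    induction y using QuotientGroup.induction_on with | _ g =>
    rw [← QuotientGroup.mk_pow, QuotientGroup.eq_one_iff]
    exact hpow g
  letI iM : Module (ZMod p) (Additive (G ⧸ K)) := zmodModuleAux (by
    intro y
    refine Additive.toMul.injective ?_
    rw [toMul_nsmul, toMul_zero]
    exact hppow y.toMul)
  set q : Additive (G ⧸ K) := Additive.ofMul (QuotientGroup.mk x : G ⧸ K) with hq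
  have hq0 : q ≠ 0 := by
    intro hcon
    apply hxK
    rw [← QuotientGroup.eq_one_iff]
    exact ofMul_eq_zero.mp hcon
  have hatom := nonzero_span_atom (K := ZMod p) q hq0
  obtain ⟨W, hW⟩ := Submodule.exists_isCompl (Submodule.span (ZMod p) {q})
  haveI hml : IsModularLattice (Submodule (ZMod p) (Additive (G ⧸ K))) := inferInstance
  have hWcoatom : IsCoatom W := hW.isAtom_iff_isCoatom.mp hatom
  have hqW : q ∉ W := by
    intro hmem
    apply hq0
    have hq2 : q ∈ Submodule.span (ZMod p) {q} ⊓ W :=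
      Submodule.mem_inf.mpr ⟨Submodule.mem_span_singleton_self q, hmem⟩
    rwa [hW.inf_eq_bot, Submodule.mem_bot] at hq2
  set M₁ : AddSubgroup (Additive (G ⧸ K)) := ((AddSubgroup.toZModSubmodule p).symm W) with hM₁def
  have hM₁ : IsCoatom M₁ := (OrderIso.isCoatom_iff (AddSubgroup.toZModSubmodule p).symm W).mpr hWcoatom
  set M₂ : Subgroup (G ⧸ K) := Subgroup.toAddSubgroup.symm M₁ with hM₂def
  have hM₂ : IsCoatom M₂ := (OrderIso.isCoatom_iff Subgroup.toAddSubgroup.symm M₁).mpr hM₁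
  have hM₃ : IsCoatom (M₂.comap (QuotientGroup.mk' K)) :=
    Subgroup.isCoatom_comap_of_surjective (QuotientGroup.mk'_surjective K) hM₂
  have hxM : x ∈ M₂.comap (QuotientGroup.mk' K) := frattini_le_coatom hM₃ hx
  apply hqW
  have h2 : (QuotientGroup.mk x : G ⧸ K) ∈ M₂ := hxM
  rw [hM₂def] at h2
  have h3 : q ∈ M₁ := h2
  rw [hM₁def] at h3
  exact h3

theorem preimage_omega1_centralizes_frattini {G : Type*} [Group G] [Finite G]
    (p : ℕ) (hp : p.Prime) (hG : IsPGroup p G) :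
    (∀ h : G, h ∈ upperCentralSeries G 2 → h ^ p ∈ Subgroup.center G →
      h ∈ Subgroup.centralizer (frattini G : Set G)) ∧
    (Subgroup.centralizer (frattini G : Set G) ≤ frattini G →
      ∀ h₁ h₂ : G,
        h₁ ∈ upperCentralSeries G 2 → h₁ ^ p ∈ Subgroup.center G →
        h₂ ∈ upperCentralSeries G 2 → h₂ ^ p ∈ Subgroup.center G →
        h₁ * h₂ = h₂ * h₁) := by
  have main : ∀ h : G, h ∈ upperCentralSeries G 2 → h ^ p ∈ Subgroup.center G →
      h ∈ Subgroup.centralizer (frattini G : Set G) := by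
    intro h hh2 hhp
    have hz : ∀ g : G, h * g * h⁻¹ * g⁻¹ ∈ Subgroup.center G := by
      intro g
      have h2 := (mem_upperCentralSeries_succ_iff (n := 1)).mp hh2 g
      rwa [upperCentralSeries_one] at h2
    -- the subgroup of elements commuting with h
    set C : Subgroup G := Subgroup.centralizer {h} with hC
    have hpowC : ∀ g : G, g ^ p ∈ C := by
      intro g
      have hzc : ∀ a : G, (h * g * h⁻¹ * g⁻¹) * a = a * (h * g * h⁻¹ * g⁻¹) := fun a =>
        (Subgroup.mem_center_iff.mp (hz g) a).symm
      have he : h * g * h⁻¹ = (h * g * h⁻¹ * g⁻¹) * g := by group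
      have hcp := conj_pow_aux hzc he p
      have h1 : h ^ p * g * (h ^ p)⁻¹ = g := by
        have h2 := Subgroup.mem_center_iff.mp hhp g
        rw [← h2]; group
      have hz1 : (h * g * h⁻¹ * g⁻¹) ^ p = 1 := by
        have h3 : (h * g * h⁻¹ * g⁻¹) ^ p * g = 1 * g := by
          rw [one_mul, ← hcp]; exact h1
        exact mul_right_cancel h3
      have hcom : Commute (h * g * h⁻¹ * g⁻¹) g := hzc g
      have hconj : h * g ^ p * h⁻¹ = g ^ p := by
        have e1 : h * g ^ p * h⁻¹ = (h * g * h⁻¹) ^ p := by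
          rw [conj_pow]
        rw [e1, he, hcom.mul_pow, hz1, one_mul]
      rw [hC, Subgroup.mem_centralizer_singleton_iff]
      have h3 := congrArg (· * h) hconj
      simpa [mul_assoc] using h3.symm
    have hcommC : commutator G ≤ C := by
      rw [_root_.commutator_def, Subgroup.commutator_le]
      intro a _ b _
      rw [hC, Subgroup.mem_centralizer_singleton_iff]
      have ha : ∀ x : G, (h * a * h⁻¹ * a⁻¹) * x = x * (h * a * h⁻¹ * a⁻¹) := fun x =>
        (Subgroup.mem_center_iff.mp (hz a) x).symm
      have hb : ∀ x : G, (h * b * h⁻¹ * b⁻¹) * x = x * (h * b * h⁻¹ * b⁻¹) := fun x =>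
        (Subgroup.mem_center_iff.mp (hz b) x).symm
      have ea : h * a * h⁻¹ = (h * a * h⁻¹ * a⁻¹) * a := by group
      have eb : h * b * h⁻¹ = (h * b * h⁻¹ * b⁻¹) * b := by group
      have hcc := conj_commutator_aux ha hb ea eb
      rw [commutatorElement_def]
      have h3 := congrArg (· * h) hcc
      simpa [mul_assoc] using h3.symm
    -- K = commutator ⊔ p-th powers
    set Pset : Set G := Set.range (fun g : G => g ^ p) with hPset
    set K : Subgroup G := commutator G ⊔ Subgroup.closure Pset with hKdef
    have hKnormal : K.Normal := by
      constructor
      intro n hn g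
      rw [hKdef] at hn ⊢
      have : (MulAut.conj g).toMonoidHom '' (Pset : Set G) = Pset := by
        ext y
        simp only [Set.mem_image, hPset, Set.mem_range]
        constructor
        · rintro ⟨-, ⟨u, rfl⟩, rfl⟩
          exact ⟨g * u * g⁻¹, by simp [MulAut.conj_apply, conj_pow]⟩
        · rintro ⟨u, rfl⟩
          refine ⟨(g⁻¹ * u * g) ^ p, ⟨g⁻¹ * u * g, rfl⟩, ?_⟩
          rw [map_pow]
          congr 1
          show g * (g⁻¹ * u * g) * g⁻¹ = u
          group
      have hmap : Subgroup.map (MulAut.conj g).toMonoidHom (commutator G ⊔ Subgroup.closure Pset)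
          ≤ commutator G ⊔ Subgroup.closure Pset := by
        rw [Subgroup.map_sup, MonoidHom.map_closure, this]
        have hmc : Subgroup.map (MulAut.conj g).toMonoidHom (commutator G) ≤ commutator G := by
          rw [_root_.commutator_def, Subgroup.map_commutator]
          exact Subgroup.commutator_mono le_top le_top
        exact sup_le_sup hmc le_rfl
      exact hmap (Subgroup.mem_map_of_mem _ hn)
    have hKle : K ≤ C := by
      rw [hKdef]
      apply sup_le hcommC
      rw [Subgroup.closure_le]
      rintro y ⟨g, rfl⟩
      exact hpowC g
    have hfr : frattini G ≤ K :=
      frattini_le_aux p hp K hKnormal le_sup_left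
        (fun g => (le_sup_right : Subgroup.closure Pset ≤ K)
          (Subgroup.subset_closure ⟨g, rfl⟩))
    rw [Subgroup.mem_centralizer_iff]
    intro y hy
    have hyC : y ∈ C := hKle (hfr hy)
    exact Subgroup.mem_centralizer_singleton_iff.mp hyC
  refine ⟨main, ?_⟩
  intro hle h₁ h₂ hh₁ hp₁ hh₂ hp₂
  have m1 := main h₁ hh₁ hp₁
  have m2 := main h₂ hh₂ hp₂
  exact Subgroup.mem_centralizer_iff.mp m2 h₁ (hle m1)
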